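/- For every positive integer m, S^{(m)}((2m)^4) = (2m/3)·(4m² + 6m − 1). -/

import Mathlib

open Finset

lemma cnt_band (N s t : ℕ) : ∑ i ∈ range N, (if s ≤ i ∧ i < t then (1:ℤ) else 0)
    = (min N t : ℤ) - (min N (min s t) : ℤ) := by
  induction N with
  | zero => simp
  | succ N ih => rw [sum_range_succ, ih]; split_ifs <;> push_cast <;> omega

lemma cnt_eq (N a c : ℕ) : ∑ i ∈ range N, (if i + a = c then (1:ℤ) else 0)
    = if a ≤ c ∧ c < N + a then 1 else 0 := by
  induction N with
  | zero => simp
  | succ N ih => rw [sum_range_succ, ih]; split_ifs <;> omega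

lemma gauss (b : ℕ) : 2 * ∑ i ∈ range b, (i:ℤ) = b * (b-1) := by
  induction b with
  | zero => simp
  | succ b ih => rw [sum_range_succ]; push_cast; push_cast at ih; ring_nf; ring_nf at ih; omega

lemma sum_range_mul (f : ℕ → ℤ) (b k : ℕ) :
    ∑ n ∈ range (b * k), f n = ∑ i ∈ range k, ∑ j ∈ range b, f (b * i + j) := by
  induction k with
  | zero => simp
  | succ k ih => rw [Nat.mul_succ, Finset.sum_range_add, ih, Finset.sum_range_succ]

lemma sign_split (b r d : ℕ) (hb : 2 ≤ b) (hd : d < b) :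
    ((-1:ℤ)) ^ ((Nat.digits b (b * r + d)).sum)
      = (-1)^d * (-1)^((Nat.digits b r).sum) := by
  rcases Nat.eq_zero_or_pos (b * r + d) with h | h
  · have hr : r = 0 := by
      rcases Nat.add_eq_zero.mp h with ⟨h1, _⟩
      exact (Nat.mul_eq_zero.mp h1).resolve_left (by omega)
    have hd0 : d = 0 := by omega
    simp [hr, hd0]
  · rw [Nat.digits_def' (by omega : 1 < b) h]
    have h1 : (b * r + d) % b = d := by
      rw [Nat.mul_add_mod, Nat.mod_eq_of_lt hd]
    have h2 : (b * r + d) / b = r := by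
      rw [Nat.mul_add_div (by omega), Nat.div_eq_of_lt hd, Nat.add_zero]
    rw [h1, h2, List.sum_cons, pow_add]

lemma sign4 (b d0 d1 d2 d3 : ℕ) (hb : 2 ≤ b)
    (h0 : d0 < b) (h1 : d1 < b) (h2 : d2 < b) (h3 : d3 < b) :
    ((-1:ℤ)) ^ ((Nat.digits b (b*(b*(b*d3+d2)+d1)+d0)).sum)
      = (-1)^(d0+(d1+(d2+d3))) := by
  rw [sign_split b _ d0 hb h0, sign_split b _ d1 hb h1, sign_split b _ d2 hb h2]
  have h4 : ((-1:ℤ)) ^ ((Nat.digits b d3).sum) = (-1)^d3 := by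
    have := sign_split b 0 d3 hb h3
    simpa using this
  rw [h4, ← pow_add, ← pow_add, ← pow_add]

lemma dvd_iff (b d0 d1 d2 d3 : ℕ) (hb : 2 ≤ b)
    (h0 : d0 < b) (h1 : d1 < b) (h2 : d2 < b) (h3 : d3 < b) :
    ((b+1) ∣ (b*(b*(b*d3+d2)+d1)+d0)) ↔
      (d0 + d2 = d1 + d3 ∨ d0 + d2 = d1 + d3 + (b+1) ∨ d1 + d3 = d0 + d2 + (b+1)) := by
  have hn : ((b*(b*(b*d3+d2)+d1)+d0 : ℕ) : ℤ)
      = (((d0:ℤ)+d2) - ((d1:ℤ)+d3))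
        + ((b:ℤ)+1) * (d1 + d2*((b:ℤ)-1) + d3*((b:ℤ)^2-(b:ℤ)+1)) := by
    push_cast; ring
  constructor
  · intro h
    have h' : ((b:ℤ)+1) ∣ ((b*(b*(b*d3+d2)+d1)+d0 : ℕ) : ℤ) := by
      exact_mod_cast Int.natCast_dvd_natCast.mpr h
    have hd : ((b:ℤ)+1) ∣ (((d0:ℤ)+d2) - ((d1:ℤ)+d3)) := by
      have := dvd_sub h' ⟨d1 + d2*((b:ℤ)-1) + d3*((b:ℤ)^2-(b:ℤ)+1), rfl⟩
      rw [hn] at this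
      simpa using this
    obtain ⟨k, hk⟩ := hd
    have hk2 : k < 2 := by
      by_contra hc; push_neg at hc
      have : ((b:ℤ)+1) * 2 ≤ ((b:ℤ)+1) * k := by
        exact mul_le_mul_of_nonneg_left hc (by positivity)
      rw [← hk] at this
      have b0 : (d0:ℤ) ≤ (b:ℤ) - 1 := by exact_mod_cast by omega
      have b2 : (d2:ℤ) ≤ (b:ℤ) - 1 := by exact_mod_cast by omega
      have b1 : (0:ℤ) ≤ (d1:ℤ) + d3 := by positivity
      linarith
    have hk1 : -2 < k := by
      by_contra hc; push_neg at hc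
      have : ((b:ℤ)+1) * k ≤ ((b:ℤ)+1) * (-2) := by
        exact mul_le_mul_of_nonneg_left hc (by positivity)
      rw [← hk] at this
      have b1 : (d1:ℤ) ≤ (b:ℤ) - 1 := by exact_mod_cast by omega
      have b3 : (d3:ℤ) ≤ (b:ℤ) - 1 := by exact_mod_cast by omega
      have b0 : (0:ℤ) ≤ (d0:ℤ) + d2 := by positivity
      linarith
    interval_cases k <;> omega
  · intro h
    have : ((b:ℤ)+1) ∣ ((b*(b*(b*d3+d2)+d1)+d0 : ℕ) : ℤ) := by
      rw [hn]
      refine dvd_add ?_ ⟨_, rfl⟩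
      rcases h with h | h | h
      · have : ((d0:ℤ)+d2) - ((d1:ℤ)+d3) = 0 := by omega
        simp [this]
      · have : ((d0:ℤ)+d2) - ((d1:ℤ)+d3) = (b:ℤ)+1 := by omega
        rw [this]
      · have : ((d0:ℤ)+d2) - ((d1:ℤ)+d3) = -((b:ℤ)+1) := by omega
        rw [this]; exact dvd_neg.mpr dvd_rfl
    exact_mod_cast this

lemma term_eq (b d0 d1 d2 d3 : ℕ) (hb : 2 ≤ b) (hbe : b % 2 = 0)
    (h0 : d0 < b) (h1 : d1 < b) (h2 : d2 < b) (h3 : d3 < b) :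
    (if (b+1) ∣ (b*(b*(b*d3+d2)+d1)+d0) then (-1:ℤ)^(d0+(d1+(d2+d3))) else 0)
      = (if d0 + d2 = d1 + d3 then (1:ℤ) else 0)
        - (if d0 + d2 = d1 + d3 + (b+1) then 1 else 0)
        - (if d1 + d3 = d0 + d2 + (b+1) then 1 else 0) := by
  rw [if_congr (dvd_iff b d0 d1 d2 d3 hb h0 h1 h2 h3) rfl rfl]
  by_cases hA : d0 + d2 = d1 + d3
  · have he : Even (d0+(d1+(d2+d3))) := ⟨d1+d3, by omega⟩
    rw [if_pos (Or.inl hA), if_pos hA, if_neg (by omega), if_neg (by omega),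
      he.neg_one_pow]
    ring
  · by_cases hB : d0 + d2 = d1 + d3 + (b+1)
    · have he : Odd (d0+(d1+(d2+d3))) := ⟨d1+d3+b/2, by omega⟩
      rw [if_pos (Or.inr (Or.inl hB)), if_neg hA, if_pos hB, if_neg (by omega),
        he.neg_one_pow]
      ring
    · by_cases hC : d1 + d3 = d0 + d2 + (b+1)
      · have he : Odd (d0+(d1+(d2+d3))) := ⟨d0+d2+b/2, by omega⟩
        rw [if_pos (Or.inr (Or.inr hC)), if_neg hA, if_neg hB, if_pos hC,
          he.neg_one_pow]
        ring
      · rw [if_neg (by tauto), if_neg hA, if_neg hB, if_neg hC]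
        ring

lemma inner2 (b d2 d3 : ℕ) (hb : 2 ≤ b) (h2 : d2 < b) (h3 : d3 < b) :
    ∑ d1 ∈ range b, ∑ d0 ∈ range b,
      ((if d0 + d2 = d1 + d3 then (1:ℤ) else 0)
        - (if d0 + d2 = d1 + d3 + (b+1) then 1 else 0)
        - (if d1 + d3 = d0 + d2 + (b+1) then 1 else 0))
    = (b:ℤ) - ((max d2 d3 - min d2 d3 : ℕ) : ℤ)
        - ((max d2 d3 - min d2 d3 - 1 : ℕ) : ℤ) := by
  have step : ∀ d1 ∈ range b,
      ∑ d0 ∈ range b,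
      ((if d0 + d2 = d1 + d3 then (1:ℤ) else 0)
        - (if d0 + d2 = d1 + d3 + (b+1) then 1 else 0)
        - (if d1 + d3 = d0 + d2 + (b+1) then 1 else 0))
      = (if d2 - d3 ≤ d1 ∧ d1 < b + d2 - d3 then (1:ℤ) else 0)
        - (if 0 ≤ d1 ∧ d1 < d2 - d3 - 1 then (1:ℤ) else 0)
        - (if d2 + b + 1 - d3 ≤ d1 ∧ d1 < b then (1:ℤ) else 0) := by
    intro d1 hd1
    have hd1' : d1 < b := mem_range.mp hd1
    rw [sum_sub_distrib, sum_sub_distrib]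
    rw [cnt_eq b d2 (d1 + d3), cnt_eq b d2 (d1 + d3 + (b+1))]
    have e3 : ∑ d0 ∈ range b, (if d1 + d3 = d0 + d2 + (b+1) then (1:ℤ) else 0)
        = if d2 + (b+1) ≤ d1 + d3 ∧ d1 + d3 < b + (d2 + (b+1)) then 1 else 0 := by
      rw [← cnt_eq b (d2 + (b+1)) (d1 + d3)]
      exact Finset.sum_congr rfl fun d0 _ => if_congr (by omega) rfl rfl
    rw [e3]
    split_ifs <;> omega
  rw [Finset.sum_congr rfl step]
  rw [sum_sub_distrib, sum_sub_distrib, cnt_band, cnt_band, cnt_band]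
  omega

lemma row (b : ℕ) :
    ∑ i ∈ range b, (((max b i - min b i : ℕ) : ℤ) + ((max b i - min b i - 1 : ℕ) : ℤ))
      = (b:ℤ)^2 := by
  have step : ∀ i ∈ range b,
      (((max b i - min b i : ℕ) : ℤ) + ((max b i - min b i - 1 : ℕ) : ℤ))
        = 2 * ((b:ℤ) - (i:ℤ)) - 1 := by
    intro i hi
    have : i < b := mem_range.mp hi
    omega
  rw [Finset.sum_congr rfl step]
  have e1 : ∑ i ∈ range b, (2 * ((b:ℤ) - i) - 1)
      = 2 * ((b:ℤ)*b - ∑ i ∈ range b, (i:ℤ)) - b := by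
    rw [Finset.sum_sub_distrib, ← Finset.mul_sum, Finset.sum_sub_distrib,
      Finset.sum_const, card_range, Finset.sum_const, card_range]
    ring
  rw [e1]
  have g := gauss b
  ring_nf; ring_nf at g; linarith

lemma row' (b : ℕ) :
    ∑ i ∈ range b, (((max i b - min i b : ℕ) : ℤ) + ((max i b - min i b - 1 : ℕ) : ℤ))
      = (b:ℤ)^2 := by
  rw [← row b]
  exact Finset.sum_congr rfl fun i _ => by rw [Nat.max_comm, Nat.min_comm]

lemma Wval (b : ℕ) :
    3 * ∑ d3 ∈ range b, ∑ d2 ∈ range b,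
        (((max d2 d3 - min d2 d3 : ℕ) : ℤ) + ((max d2 d3 - min d2 d3 - 1 : ℕ) : ℤ))
      = 2*(b:ℤ)^3 - 3*(b:ℤ)^2 + b := by
  induction b with
  | zero => simp
  | succ b ih =>
      simp only [Finset.sum_range_succ]
      rw [Finset.sum_add_distrib, row b, row' b]
      push_cast
      push_cast at ih
      have hbb : ((max b b - min b b : ℕ) : ℤ) + ((max b b - min b b - 1 : ℕ) : ℤ) = 0 := by
        omega
      rw [hbb]
      ring_nf
      ring_nf at ih
      linarith

def S (m x : ℕ) : ℤ :=
  ∑ n ∈ Finset.range x, if (2 * m + 1) ∣ n then (-1 : ℤ) ^ ((Nat.digits (2 * m) n).sum) else 0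

theorem S_fourth_power (m : ℕ) (hm : 0 < m) :
    (S m ((2 * m) ^ 4) : ℚ) = (2 * m / 3) * (4 * m ^ 2 + 6 * m - 1) := by
  have hb : 2 ≤ 2 * m := by omega
  have key : 3 * S m ((2 * m) ^ 4)
      = (2*(m:ℤ))^3 + 3*(2*(m:ℤ))^2 - 2*(m:ℤ) := by
    have e4 : (2*m)^4 = (2*m) * ((2*m) * ((2*m) * (2*m))) := by ring
    rw [S, e4, sum_range_mul, sum_range_mul, sum_range_mul]
    have main : (∑ d3 ∈ range (2*m), ∑ d2 ∈ range (2*m), ∑ d1 ∈ range (2*m),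
          ∑ d0 ∈ range (2*m),
          (if (2*m+1) ∣ (2*m*(2*m*(2*m*d3+d2)+d1)+d0)
            then (-1:ℤ)^((Nat.digits (2*m) (2*m*(2*m*(2*m*d3+d2)+d1)+d0)).sum) else 0))
        = ∑ d3 ∈ range (2*m), ∑ d2 ∈ range (2*m),
            ((2*m:ℕ) - ((max d2 d3 - min d2 d3 : ℕ) : ℤ)
              - ((max d2 d3 - min d2 d3 - 1 : ℕ) : ℤ)) := by
      refine Finset.sum_congr rfl fun d3 hd3 => Finset.sum_congr rfl fun d2 hd2 => ?_
      have h3 := mem_range.mp hd3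
      have h2 := mem_range.mp hd2
      rw [← inner2 (2*m) d2 d3 hb h2 h3]
      refine Finset.sum_congr rfl fun d1 hd1 => Finset.sum_congr rfl fun d0 hd0 => ?_
      have h1 := mem_range.mp hd1
      have h0 := mem_range.mp hd0
      rw [← term_eq (2*m) d0 d1 d2 d3 hb (by omega) h0 h1 h2 h3]
      exact if_congr Iff.rfl (sign4 (2*m) d0 d1 d2 d3 hb h0 h1 h2 h3) rfl
    rw [main]
    have w := Wval (2*m)
    simp only [sub_sub, Finset.sum_sub_distrib, Finset.sum_const, card_range,
      nsmul_eq_mul]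
    push_cast at w ⊢
    ring_nf at w ⊢
    linarith
  have keyQ : 3 * (S m ((2 * m) ^ 4) : ℚ)
      = (2*(m:ℚ))^3 + 3*(2*(m:ℚ))^2 - 2*(m:ℚ) := by
    exact_mod_cast congrArg (fun z : ℤ => (z : ℚ)) key
  have h3 : (3:ℚ) ≠ 0 := by norm_num
  field_simp
  push_cast at keyQ ⊢
  ring_nf at keyQ ⊢
  linarith
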